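/- Let P be a vector space partition of a 2t-dimensional vector space V over the finite field F with q elements, and let a be the integer with m_t = q^t + 1 − a. Then for every integer d with 1 ≤ d ≤ t − 1 and every integer x with 1 ≤ x ≤ m_d and x < (q^t − 1)/(q^{t−d} − 1), the inequality a ≥ x − R_q(t, d, x) holds, as an inequality of rational numbers. -/

import Mathlib

attribute [local instance] Classical.propDecidable

/-- A vector space partition: a finite set of nonzero subspaces such that every
nonzero vector lies in exactly one member. -/
def IsVSPartition (F : Type*) {V : Type*} [Field F] [AddCommGroup V] [Module F V]
    (P : Finset (Submodule F V)) : Prop :=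
  (∀ U ∈ P, U ≠ ⊥) ∧ ∀ v : V, v ≠ 0 → ∃! U : Submodule F V, U ∈ P ∧ v ∈ U

/-- The number `m_d` of members of `P` of dimension `d`. -/
noncomputable def dimCount (F : Type*) {V : Type*} [Field F] [AddCommGroup V] [Module F V]
    (P : Finset (Submodule F V)) (d : ℕ) : ℕ :=
  (P.filter fun (U : Submodule F V) => Module.finrank F ↥U = d).card

/-- The rational number `R_q(t, d, m)`. -/
def Rq (q t d m : ℕ) : ℚ :=
  (m : ℚ) * ((m : ℚ) - 1) *
      (((q : ℚ) ^ (2 * t - 2 * d) - 1) / 2 + 1 - (q : ℚ) ^ (t - d)) /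
    ((q : ℚ) ^ t - 1 - (m : ℚ) * ((q : ℚ) ^ (t - d) - 1))

open Module

lemma bonferroni_aux {α ι : Type*} [DecidableEq α] [DecidableEq ι] (s : Finset ι)
    (A : ι → Finset α) :
    2 * ∑ i ∈ s, (A i).card ≤
      2 * (s.biUnion A).card + ∑ p ∈ s.offDiag, (A p.1 ∩ A p.2).card := by
  induction s using Finset.induction_on with
  | empty => simp
  | @insert k s hk ih =>
    have h1 : (A k ∪ s.biUnion A).card + (A k ∩ s.biUnion A).card
        = (A k).card + (s.biUnion A).card := Finset.card_union_add_card_inter _ _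
    have h2 : (A k ∩ s.biUnion A).card ≤ ∑ j ∈ s, (A k ∩ A j).card := by
      have : A k ∩ s.biUnion A = s.biUnion (fun j => A k ∩ A j) := by
        ext a; simp [Finset.mem_biUnion, Finset.mem_inter]; tauto
      rw [this]; exact Finset.card_biUnion_le
    have d1 : Disjoint s.offDiag ({k} ×ˢ s) := by
      rw [Finset.disjoint_left]
      intro p hp hp2
      simp only [Finset.mem_offDiag] at hp
      simp only [Finset.mem_product, Finset.mem_singleton] at hp2
      exact hk (hp2.1 ▸ hp.1)
    have d2 : Disjoint (s.offDiag ∪ {k} ×ˢ s) (s ×ˢ {k}) := by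
      rw [Finset.disjoint_left]
      intro p hp hp2
      simp only [Finset.mem_product, Finset.mem_singleton] at hp2
      simp only [Finset.mem_union, Finset.mem_offDiag, Finset.mem_product,
        Finset.mem_singleton] at hp
      rcases hp with h | h
      · exact hk (hp2.2 ▸ h.2.1)
      · exact hk (hp2.2 ▸ h.2)
    have e1 : ∑ p ∈ ({k} ×ˢ s), (A p.1 ∩ A p.2).card = ∑ j ∈ s, (A k ∩ A j).card := by
      rw [Finset.sum_product, Finset.sum_singleton]
    have e2 : ∑ p ∈ (s ×ˢ {k}), (A p.1 ∩ A p.2).card = ∑ j ∈ s, (A j ∩ A k).card := by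
      rw [Finset.sum_product]; simp
    have h3 : ∑ p ∈ (insert k s).offDiag, (A p.1 ∩ A p.2).card
        = ∑ p ∈ s.offDiag, (A p.1 ∩ A p.2).card
          + (∑ j ∈ s, (A k ∩ A j).card + ∑ j ∈ s, (A j ∩ A k).card) := by
      rw [Finset.offDiag_insert hk, Finset.sum_union d2, Finset.sum_union d1, e1, e2, add_assoc]
    have h4 : ∑ j ∈ s, (A j ∩ A k).card = ∑ j ∈ s, (A k ∩ A j).card := by
      apply Finset.sum_congr rfl; intro j _; rw [Finset.inter_comm]
    rw [Finset.sum_insert hk, Finset.biUnion_insert, h3, h4]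
    omega

lemma hyperplane_count {F V : Type*} [Field F] [Fintype F] [AddCommGroup V] [Module F V]
    [FiniteDimensional F V] [Fintype (Submodule F V)] (S : Submodule F V) :
    (Finset.univ.filter fun H : Submodule F V =>
        finrank F ↥H + 1 = finrank F V ∧ S ≤ H).card * (Fintype.card F - 1)
      = Fintype.card F ^ (finrank F V - finrank F ↥S) - 1 := by
  classical
  haveI : Finite V := Module.finite_of_finite F
  haveI : Fintype V := Fintype.ofFinite V
  haveI : Finite (Module.Dual F V) := Module.finite_of_finite F
  haveI : Fintype (Module.Dual F V) := Fintype.ofFinite _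
  set n := finrank F V with hn
  set q := Fintype.card F with hq
  set Hyps : Finset (Submodule F V) :=
    Finset.univ.filter (fun H : Submodule F V => finrank F ↥H + 1 = n ∧ S ≤ H) with hHyps
  set A : Submodule F (Module.Dual F V) := S.dualAnnihilator with hAdef
  have hA : finrank F ↥A = n - finrank F ↥S := by
    have h1 : finrank F ↥A = finrank F (Module.Dual F (V ⧸ S)) :=
      (LinearEquiv.finrank_eq (Submodule.dualQuotEquivDualAnnihilator S)).symm
    rw [h1, Subspace.dual_finrank_eq]
    have h2 := Submodule.finrank_quotient_add_finrank S
    omega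
  have hcardA : Fintype.card ↥A = q ^ (n - finrank F ↥S) := by
    rw [card_eq_pow_finrank (K := F), hA]
  set D : Finset (Module.Dual F V) := Finset.univ.filter (fun φ => φ ∈ A ∧ φ ≠ 0) with hDdef
  have hD : D.card = q ^ (n - finrank F ↥S) - 1 := by
    have : D = ((A : Set (Module.Dual F V)).toFinset).erase 0 := by
      ext φ
      simp only [hDdef, Finset.mem_filter, Finset.mem_univ, true_and, Finset.mem_erase,
        Set.mem_toFinset, SetLike.mem_coe]
      tauto
    rw [this, Finset.card_erase_of_mem (by simp [Set.mem_toFinset]), Set.toFinset_card]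
    rw [← hcardA]
    congr 1
  -- fibers of the kernel map
  have hmapsto : ∀ φ ∈ D, LinearMap.ker φ ∈ Hyps := by
    intro φ hφ
    simp only [hDdef, Finset.mem_filter, Finset.mem_univ, true_and] at hφ
    obtain ⟨hφA, hφ0⟩ := hφ
    simp only [hHyps, Finset.mem_filter, Finset.mem_univ, true_and]
    constructor
    · have hr : finrank F ↥(LinearMap.range φ) = 1 := by
        apply le_antisymm
        · exact le_trans (Submodule.finrank_le _) (le_of_eq (finrank_self F))
        · have hrb : LinearMap.range φ ≠ ⊥ := by
            rwa [ne_eq, LinearMap.range_eq_bot]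
          have h0 : finrank F ↥(LinearMap.range φ) ≠ 0 := by
            rwa [ne_eq, Submodule.finrank_eq_zero]
          omega
      have := LinearMap.finrank_range_add_finrank_ker φ
      omega
    · intro w hw
      exact LinearMap.mem_ker.mpr ((Submodule.mem_dualAnnihilator φ).mp hφA w hw)
  have hfiber : ∀ H ∈ Hyps, (D.filter fun φ => LinearMap.ker φ = H).card = q - 1 := by
    intro H hH
    simp only [hHyps, Finset.mem_filter, Finset.mem_univ, true_and] at hH
    obtain ⟨hHrk, hSH⟩ := hH
    have hq1 : finrank F (V ⧸ H) = 1 := by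
      have := Submodule.finrank_quotient_add_finrank H
      omega
    have e : (V ⧸ H) ≃ₗ[F] F := LinearEquiv.ofFinrankEq _ _ (by rw [hq1, finrank_self])
    set φ₀ : Module.Dual F V := e.toLinearMap ∘ₗ H.mkQ with hφ₀def
    have hker : LinearMap.ker φ₀ = H := by
      rw [hφ₀def, LinearMap.ker_comp, LinearEquiv.ker, Submodule.comap_bot, Submodule.ker_mkQ]
    have hφ₀ : φ₀ ≠ 0 := by
      intro h0
      have h1 : LinearMap.ker φ₀ = ⊤ := by rw [h0]; exact LinearMap.ker_zero
      rw [hker] at h1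
      have h2 : finrank F ↥H = n := by rw [h1, finrank_top]
      omega
    obtain ⟨v, hv⟩ : ∃ v, φ₀ v ≠ 0 := by
      by_contra hc
      push_neg at hc
      exact hφ₀ (LinearMap.ext fun w => by simp [hc w])
    have himg : D.filter (fun φ => LinearMap.ker φ = H)
        = (Finset.univ.erase (0 : F)).image (fun c => c • φ₀) := by
      ext ψ
      simp only [Finset.mem_filter, Finset.mem_image, Finset.mem_erase, Finset.mem_univ,
        true_and, and_true, hDdef]
      constructor
      · rintro ⟨⟨hψA, hψ0⟩, hkψ⟩
        have hsub : ⨅ _ : Unit, LinearMap.ker φ₀ ≤ LinearMap.ker ψ := by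
          rw [iInf_const, hker, hkψ]
        have hspan := mem_span_of_iInf_ker_le_ker (L := fun _ : Unit => φ₀) (K := ψ) hsub
        rw [Set.range_const, Submodule.mem_span_singleton] at hspan
        obtain ⟨c, hc⟩ := hspan
        refine ⟨c, fun h0 => hψ0 ?_, hc⟩
        rw [← hc, h0, zero_smul]
      · rintro ⟨c, hc0, rfl⟩
        have hφ₀A : φ₀ ∈ A := by
          rw [hAdef, Submodule.mem_dualAnnihilator]
          intro w hw
          have hwk : w ∈ LinearMap.ker φ₀ := hker ▸ hSH hw
          exact LinearMap.mem_ker.mp hwk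
        refine ⟨⟨A.smul_mem c hφ₀A, ?_⟩, ?_⟩
        · intro h0
          apply hv
          have h1 := congrArg (fun ψ : Module.Dual F V => ψ v) h0
          simp only [LinearMap.smul_apply, smul_eq_mul, LinearMap.zero_apply] at h1
          rcases mul_eq_zero.mp h1 with h | h
          · exact absurd h hc0
          · exact h
        · rw [LinearMap.ker_smul _ _ hc0, hker]
    rw [himg, Finset.card_image_of_injective _ (smul_left_injective F hφ₀),
      Finset.card_erase_of_mem (Finset.mem_univ _), Finset.card_univ]
  have hsum := Finset.card_eq_sum_card_fiberwise hmapsto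
  rw [hD] at hsum
  rw [hsum, Finset.sum_congr rfl hfiber, Finset.sum_const, smul_eq_mul]

/-- Theorem: for every `1 ≤ d ≤ t - 1` and every `1 ≤ x ≤ m_d` with
`x < (q^t - 1)/(q^{t-d} - 1)`, the inequality `a ≥ x - R_q(t, d, x)` holds. -/
theorem stmt19 (q t : ℕ) (F V : Type*) [Field F] [Fintype F] [AddCommGroup V]
    [Module F V] [FiniteDimensional F V] (hq : Fintype.card F = q)
    (hV : Module.finrank F V = 2 * t)
    (P : Finset (Submodule F V)) (hP : IsVSPartition F P)
    (a : ℤ) (ha : (dimCount F P t : ℤ) = (q : ℤ) ^ t + 1 - a) :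
    ∀ d x : ℕ, 1 ≤ d → d ≤ t - 1 → 1 ≤ x → x ≤ dimCount F P d →
      (x : ℚ) < ((q : ℚ) ^ t - 1) / ((q : ℚ) ^ (t - d) - 1) →
      (x : ℚ) - Rq q t d x ≤ (a : ℚ) := by
  intro d x hd hdt hx1 hxle hxlt
  classical
  obtain ⟨hPne, hPuniq⟩ := hP
  have hq2 : 2 ≤ q := hq ▸ Fintype.one_lt_card
  have ht2 : 2 ≤ t := by omega
  have hdt' : d + 1 ≤ t := by omega
  haveI : Finite V := Module.finite_of_finite F
  haveI : Fintype V := Fintype.ofFinite V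
  haveI : Finite (Submodule F V) :=
    Finite.of_injective (fun M : Submodule F V => (M : Set V)) SetLike.coe_injective
  haveI : Fintype (Submodule F V) := Fintype.ofFinite _
  -- distinct members intersect trivially
  have hdisj : ∀ M ∈ P, ∀ M' ∈ P, M ≠ M' → M ⊓ M' = ⊥ := by
    intro M hM M' hM' hne
    rw [Submodule.eq_bot_iff]
    intro v hv
    by_contra hv0
    obtain ⟨U, _, hUuniq⟩ := hPuniq v hv0
    have h1 : M = U := hUuniq M ⟨hM, (Submodule.mem_inf.mp hv).1⟩
    have h2 : M' = U := hUuniq M' ⟨hM', (Submodule.mem_inf.mp hv).2⟩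
    exact hne (h1.trans h2.symm)
  have hsup : ∀ M ∈ P, ∀ M' ∈ P, M ≠ M' →
      finrank F ↥(M ⊔ M') = finrank F ↥M + finrank F ↥M' := by
    intro M hM M' hM' hne
    have h1 := Submodule.finrank_sup_add_finrank_inf_eq M M'
    rw [hdisj M hM M' hM' hne] at h1
    rw [finrank_bot] at h1
    omega
  set Pt : Finset (Submodule F V) :=
    P.filter (fun U : Submodule F V => Module.finrank F ↥U = t) with hPtdef
  set m : ℕ := Pt.card with hmdef
  have hmc : dimCount F P t = m := rfl
  have hmQ : (m : ℚ) = (q : ℚ) ^ t + 1 - (a : ℚ) := by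
    rw [hmc] at ha
    have := congrArg (Int.cast : ℤ → ℚ) ha
    push_cast at this
    exact this
  obtain ⟨Px, hPxsub, hPxcard⟩ := Finset.exists_subset_card_eq hxle
  have hPtP : ∀ W ∈ Pt, W ∈ P ∧ finrank F ↥W = t := by
    intro W hW; exact Finset.mem_filter.mp hW
  have hPxP : ∀ U ∈ Px, U ∈ P ∧ finrank F ↥U = d := by
    intro U hU; exact Finset.mem_filter.mp (hPxsub hU)
  -- counting hyperplanes over a fixed subspace
  have hcount : ∀ S : Submodule F V,
      (Finset.univ.filter fun H : Submodule F V =>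
        finrank F ↥H + 1 = 2 * t ∧ S ≤ H).card * (q - 1)
        = q ^ (2 * t - finrank F ↥S) - 1 := by
    intro S
    have h := hyperplane_count (F := F) S
    rw [hV, hq] at h
    exact h
  set κ : ℚ := (q : ℚ) - 1 with hκdef
  have hκpos : 0 < κ := by
    have : (2:ℚ) ≤ (q:ℚ) := by exact_mod_cast hq2
    rw [hκdef]; linarith
  have hcountQ : ∀ S : Submodule F V,
      ((Finset.univ.filter fun H : Submodule F V =>
        finrank F ↥H + 1 = 2 * t ∧ S ≤ H).card : ℚ) * κ
        = (q : ℚ) ^ (2 * t - finrank F ↥S) - 1 := by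
    intro S
    have h := hcount S
    have h1 : 1 ≤ q ^ (2 * t - finrank F ↥S) := Nat.one_le_pow _ _ (by omega)
    have h2 : (Finset.univ.filter fun H : Submodule F V =>
        finrank F ↥H + 1 = 2 * t ∧ S ≤ H).card * (q - 1) + 1
        = q ^ (2 * t - finrank F ↥S) := by omega
    have h3 := congrArg (Nat.cast : ℕ → ℚ) h2
    push_cast [Nat.cast_sub (show 1 ≤ q by omega)] at h3
    rw [hκdef]
    linarith
  -- the hyperplanes and free hyperplanes
  set Hyp : Finset (Submodule F V) :=
    Finset.univ.filter (fun H : Submodule F V => finrank F ↥H + 1 = 2 * t) with hHypdef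
  -- a proper subspace contains at most one member of Pt
  have honeW : ∀ H : Submodule F V, finrank F ↥H + 1 = 2 * t →
      ∀ W ∈ Pt, ∀ W' ∈ Pt, W ≤ H → W' ≤ H → W = W' := by
    intro H hH W hW W' hW' hWH hW'H
    by_contra hne
    have h1 : finrank F ↥(W ⊔ W') = 2 * t := by
      rw [hsup W (hPtP W hW).1 W' (hPtP W' hW').1 hne, (hPtP W hW).2, (hPtP W' hW').2]
      ring
    have h2 : W ⊔ W' ≤ H := sup_le hWH hW'H
    have h3 := Submodule.finrank_mono h2
    omega
  set Free : Finset (Submodule F V) :=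
    Hyp.filter (fun H => ∀ W ∈ Pt, ¬ W ≤ H) with hFreedef
  -- cardinality of Free
  have hdisjW : ∀ W ∈ Pt, ∀ W' ∈ Pt, W ≠ W' →
      Disjoint (Hyp.filter (fun H => W ≤ H)) (Hyp.filter (fun H => W' ≤ H)) := by
    intro W hW W' hW' hne
    rw [Finset.disjoint_left]
    intro H h1 h2
    have hHp : finrank F ↥H + 1 = 2 * t := by
      have := (Finset.mem_filter.mp h1).1
      rw [hHypdef] at this
      exact (Finset.mem_filter.mp this).2
    exact hne (honeW H hHp W hW W' hW' (Finset.mem_filter.mp h1).2 (Finset.mem_filter.mp h2).2)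
  have hWQ : ∀ W ∈ Pt, ((Hyp.filter (fun H => W ≤ H)).card : ℚ) * κ = (q:ℚ) ^ t - 1 := by
    intro W hW
    have heq : Hyp.filter (fun H => W ≤ H)
        = Finset.univ.filter (fun H : Submodule F V =>
            finrank F ↥H + 1 = 2 * t ∧ W ≤ H) := by
      rw [hHypdef, Finset.filter_filter]
    have hexp : 2 * t - finrank F ↥W = t := by
      rw [(hPtP W hW).2]; omega
    rw [heq, hcountQ W, hexp]
  have hHypQ : (Hyp.card : ℚ) * κ = (q:ℚ) ^ (2 * t) - 1 := by
    have hHyp0 : Hyp = Finset.univ.filter (fun H : Submodule F V =>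
        finrank F ↥H + 1 = 2 * t ∧ (⊥ : Submodule F V) ≤ H) := by
      rw [hHypdef]; apply Finset.filter_congr; intro H _; simp
    have h := hcountQ (⊥ : Submodule F V)
    rw [finrank_bot, Nat.sub_zero] at h
    rw [hHyp0, h]
  have hFreeQ : (Free.card : ℚ) * κ
      = ((q : ℚ) ^ (2 * t) - 1) - (m : ℚ) * ((q : ℚ) ^ t - 1) := by
    have hnf : Hyp.filter (fun H => ¬ ∀ W ∈ Pt, ¬ W ≤ H)
        = Pt.biUnion (fun W => Hyp.filter (fun H => W ≤ H)) := by
      ext H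
      simp only [Finset.mem_filter, Finset.mem_biUnion]
      push_neg
      constructor
      · rintro ⟨hH, W, hW, hWH⟩; exact ⟨W, hW, hH, hWH⟩
      · rintro ⟨W, hW, hH, hWH⟩; exact ⟨hH, W, hW, hWH⟩
    have hsplit : Hyp.card = Free.card
        + (Pt.biUnion (fun W => Hyp.filter (fun H => W ≤ H))).card := by
      rw [hFreedef, ← hnf, Finset.card_filter_add_card_filter_not]
    have hbU := Finset.card_biUnion hdisjW
    have hsumQ : ((Pt.biUnion (fun W => Hyp.filter (fun H => W ≤ H))).card : ℚ) * κ
        = (m : ℚ) * ((q:ℚ) ^ t - 1) := by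
      rw [hbU]
      push_cast
      rw [Finset.sum_mul, Finset.sum_congr rfl hWQ, Finset.sum_const, hmdef]
      simp [mul_comm]
    have hc := congrArg (fun n : ℕ => (n : ℚ) * κ) hsplit
    simp only [Nat.cast_add, add_mul] at hc
    rw [hHypQ, hsumQ] at hc
    linarith
  -- cardinality of Free ∩ over U
  have hAUQ : ∀ U ∈ Px, ((Free.filter (fun H => U ≤ H)).card : ℚ) * κ
      = ((q : ℚ) ^ (2 * t - d) - 1) - (m : ℚ) * ((q : ℚ) ^ (t - d) - 1) := by
    intro U hU
    obtain ⟨hUP, hUd⟩ := hPxP U hU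
    have hUW : ∀ W ∈ Pt, U ≠ W := by
      intro W hW h
      have := (hPtP W hW).2
      rw [← h, hUd] at this
      omega
    -- the hyperplanes over U
    have hHypUQ : ((Hyp.filter (fun H => U ≤ H)).card : ℚ) * κ = (q:ℚ) ^ (2 * t - d) - 1 := by
      have heq : Hyp.filter (fun H => U ≤ H)
          = Finset.univ.filter (fun H : Submodule F V =>
              finrank F ↥H + 1 = 2 * t ∧ U ≤ H) := by
        rw [hHypdef, Finset.filter_filter]
      have hexp : 2 * t - finrank F ↥U = 2 * t - d := by rw [hUd]
      rw [heq, hcountQ U, hexp]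
    have hWUQ : ∀ W ∈ Pt,
        (((Hyp.filter (fun H => U ≤ H)).filter (fun H => W ≤ H)).card : ℚ) * κ
          = (q:ℚ) ^ (t - d) - 1 := by
      intro W hW
      have hfr : finrank F ↥(U ⊔ W) = d + t := by
        rw [hsup U hUP W (hPtP W hW).1 (hUW W hW), hUd, (hPtP W hW).2]
      have heq : (Hyp.filter (fun H => U ≤ H)).filter (fun H => W ≤ H)
          = Finset.univ.filter (fun H : Submodule F V =>
              finrank F ↥H + 1 = 2 * t ∧ U ⊔ W ≤ H) := by
        rw [hHypdef, Finset.filter_filter, Finset.filter_filter]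
        apply Finset.filter_congr
        intro H _
        simp [sup_le_iff, and_assoc]
      have hexp : 2 * t - finrank F ↥(U ⊔ W) = t - d := by rw [hfr]; omega
      rw [heq, hcountQ (U ⊔ W), hexp]
    have hdisjWU : ∀ W ∈ Pt, ∀ W' ∈ Pt, W ≠ W' →
        Disjoint ((Hyp.filter (fun H => U ≤ H)).filter (fun H => W ≤ H))
          ((Hyp.filter (fun H => U ≤ H)).filter (fun H => W' ≤ H)) := by
      intro W hW W' hW' hne
      rw [Finset.disjoint_left]
      intro H h1 h2
      have hHp : finrank F ↥H + 1 = 2 * t := by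
        have h3 := (Finset.mem_filter.mp (Finset.mem_filter.mp h1).1).1
        rw [hHypdef] at h3
        exact (Finset.mem_filter.mp h3).2
      exact hne (honeW H hHp W hW W' hW'
        (Finset.mem_filter.mp h1).2 (Finset.mem_filter.mp h2).2)
    have hff : (Hyp.filter (fun H => U ≤ H)).filter (fun H => ∀ W ∈ Pt, ¬ W ≤ H)
        = Free.filter (fun H => U ≤ H) := by
      ext H
      simp only [hFreedef, Finset.mem_filter]
      tauto
    have hnfU : (Hyp.filter (fun H => U ≤ H)).filter (fun H => ¬ ∀ W ∈ Pt, ¬ W ≤ H)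
        = Pt.biUnion (fun W => (Hyp.filter (fun H => U ≤ H)).filter (fun H => W ≤ H)) := by
      ext H
      simp only [Finset.mem_filter, Finset.mem_biUnion]
      push_neg
      constructor
      · rintro ⟨hH, W, hW, hWH⟩; exact ⟨W, hW, hH, hWH⟩
      · rintro ⟨W, hW, hH, hWH⟩; exact ⟨hH, W, hW, hWH⟩
    have hsplitU : (Hyp.filter (fun H => U ≤ H)).card = (Free.filter (fun H => U ≤ H)).card
        + (Pt.biUnion (fun W => (Hyp.filter (fun H => U ≤ H)).filter (fun H => W ≤ H))).card := by
      rw [← hff, ← hnfU, Finset.card_filter_add_card_filter_not]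
    have hbUU := Finset.card_biUnion hdisjWU
    have hsumQU : ((Pt.biUnion (fun W =>
        (Hyp.filter (fun H => U ≤ H)).filter (fun H => W ≤ H))).card : ℚ) * κ
        = (m : ℚ) * ((q:ℚ) ^ (t - d) - 1) := by
      rw [hbUU]
      push_cast
      rw [Finset.sum_mul, Finset.sum_congr rfl hWUQ, Finset.sum_const, hmdef]
      simp [mul_comm]
    have hc := congrArg (fun n : ℕ => (n : ℚ) * κ) hsplitU
    simp only [Nat.cast_add, add_mul] at hc
    rw [hHypUQ, hsumQU] at hc
    linarith
  -- pairs
  have hpairQ : ∀ p ∈ Px.offDiag,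
      (((Free.filter (fun H => p.1 ≤ H)) ∩ (Free.filter (fun H => p.2 ≤ H))).card : ℚ) * κ
        ≤ (q : ℚ) ^ (2 * t - 2 * d) - 1 := by
    intro p hp
    rw [Finset.mem_offDiag] at hp
    obtain ⟨hU1, hU2, hUne⟩ := hp
    have hfr : finrank F ↥(p.1 ⊔ p.2) = d + d := by
      rw [hsup p.1 (hPxP p.1 hU1).1 p.2 (hPxP p.2 hU2).1 hUne,
        (hPxP p.1 hU1).2, (hPxP p.2 hU2).2]
    have hsub : (Free.filter (fun H => p.1 ≤ H)) ∩ (Free.filter (fun H => p.2 ≤ H))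
        ⊆ Finset.univ.filter (fun H : Submodule F V =>
            finrank F ↥H + 1 = 2 * t ∧ p.1 ⊔ p.2 ≤ H) := by
      intro H hH
      rw [Finset.mem_inter] at hH
      obtain ⟨h1, h2⟩ := hH
      rw [Finset.mem_filter] at h1 h2
      have hHyp' : H ∈ Hyp := Finset.mem_of_mem_filter H (hFreedef ▸ h1.1)
      rw [hHypdef, Finset.mem_filter] at hHyp'
      rw [Finset.mem_filter]
      exact ⟨Finset.mem_univ _, hHyp'.2, sup_le h1.2 h2.2⟩
    have hle := Finset.card_le_card hsub
    have hleQ : ((((Free.filter (fun H => p.1 ≤ H)) ∩ (Free.filter (fun H => p.2 ≤ H))).card : ℚ))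
        ≤ ((Finset.univ.filter (fun H : Submodule F V =>
            finrank F ↥H + 1 = 2 * t ∧ p.1 ⊔ p.2 ≤ H)).card : ℚ) := by
      exact_mod_cast hle
    have h1 := hcountQ (p.1 ⊔ p.2)
    have hexp : 2 * t - finrank F ↥(p.1 ⊔ p.2) = 2 * t - 2 * d := by rw [hfr]; omega
    rw [hexp] at h1
    calc ((((Free.filter (fun H => p.1 ≤ H)) ∩ (Free.filter (fun H => p.2 ≤ H))).card : ℚ)) * κ
        ≤ ((Finset.univ.filter (fun H : Submodule F V =>
            finrank F ↥H + 1 = 2 * t ∧ p.1 ⊔ p.2 ≤ H)).card : ℚ) * κ :=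
          mul_le_mul_of_nonneg_right hleQ (le_of_lt hκpos)
      _ = (q : ℚ) ^ (2 * t - 2 * d) - 1 := h1
  -- master inequality
  set AA := fun U : Submodule F V => Free.filter (fun H => U ≤ H) with hAAdef
  have hmaster := bonferroni_aux Px AA
  have hbUle : (Px.biUnion AA).card ≤ Free.card := by
    apply Finset.card_le_card
    intro H hH
    obtain ⟨U, _, hH2⟩ := Finset.mem_biUnion.mp hH
    exact Finset.mem_of_mem_filter H hH2
  have hmasterQ : 2 * (∑ U ∈ Px, ((AA U).card : ℚ))
      ≤ 2 * ((Px.biUnion AA).card : ℚ)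
        + ∑ p ∈ Px.offDiag, (((AA p.1) ∩ (AA p.2)).card : ℚ) := by
    exact_mod_cast hmaster
  have hineq := mul_le_mul_of_nonneg_right hmasterQ (le_of_lt hκpos)
  have L1 : (∑ U ∈ Px, ((AA U).card : ℚ)) * κ
      = (x:ℚ) * (((q:ℚ)^(2*t-d) - 1) - (m:ℚ)*((q:ℚ)^(t-d) - 1)) := by
    rw [Finset.sum_mul, Finset.sum_congr rfl hAUQ, Finset.sum_const, hPxcard, nsmul_eq_mul]
  have L2 : ((Px.biUnion AA).card : ℚ) * κ ≤ ((q:ℚ)^(2*t) - 1) - (m:ℚ)*((q:ℚ)^t - 1) := by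
    rw [← hFreeQ]
    apply mul_le_mul_of_nonneg_right _ (le_of_lt hκpos)
    exact_mod_cast hbUle
  have L3 : (∑ p ∈ Px.offDiag, (((AA p.1) ∩ (AA p.2)).card : ℚ)) * κ
      ≤ ((x:ℚ)*(x:ℚ) - (x:ℚ)) * ((q:ℚ)^(2*t-2*d) - 1) := by
    rw [Finset.sum_mul]
    refine le_trans (Finset.sum_le_sum hpairQ) ?_
    rw [Finset.sum_const, nsmul_eq_mul, Finset.offDiag_card, hPxcard]
    have hxx : ((x*x - x : ℕ) : ℚ) = (x:ℚ)*(x:ℚ) - (x:ℚ) := by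
      have hle : x ≤ x * x := Nat.le_mul_of_pos_left x (by omega)
      push_cast [Nat.cast_sub hle]
      ring
    rw [hxx]
  have hstar : 2 * (x:ℚ) * (((q : ℚ) ^ (2 * t - d) - 1) - (m : ℚ) * ((q : ℚ) ^ (t - d) - 1))
      ≤ 2 * (((q : ℚ) ^ (2 * t) - 1) - (m : ℚ) * ((q : ℚ) ^ t - 1))
        + ((x:ℚ) * (x:ℚ) - (x:ℚ)) * ((q : ℚ) ^ (2 * t - 2 * d) - 1) := by
    rw [add_mul] at hineq
    linarith [hineq, L1, L2, L3]
  -- final algebra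
  have hq1 : (1:ℚ) < (q:ℚ) := by exact_mod_cast (show 1 < q by omega)
  have hY1 : (1:ℚ) < (q:ℚ)^(t-d) := one_lt_pow₀ hq1 (by omega)
  have hb' : (0:ℚ) < (q:ℚ)^(t-d) - 1 := by linarith
  rw [lt_div_iff₀ hb'] at hxlt
  have e1 : (q:ℚ)^t = (q:ℚ)^(t-d) * (q:ℚ)^d := by
    rw [← pow_add]; congr 1; omega
  have e2 : (q:ℚ)^(2*t) = ((q:ℚ)^(t-d))^2 * ((q:ℚ)^d)^2 := by
    rw [← pow_mul, ← pow_mul, ← pow_add]; congr 1; omega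
  have e3 : (q:ℚ)^(2*t-d) = ((q:ℚ)^(t-d))^2 * (q:ℚ)^d := by
    rw [← pow_mul, ← pow_add]; congr 1; omega
  have e4 : (q:ℚ)^(2*t-2*d) = ((q:ℚ)^(t-d))^2 := by
    rw [← pow_mul]; congr 1; omega
  rw [hmQ, e2, e3, e4, e1] at hstar
  rw [e1] at hxlt
  unfold Rq
  rw [e4, e1]
  have hD : 0 < (q:ℚ)^(t-d) * (q:ℚ)^d - 1 - (x:ℚ)*((q:ℚ)^(t-d) - 1) := by
    linarith [hxlt]
  rw [sub_le_iff_le_add, ← sub_le_iff_le_add']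
  rw [le_div_iff₀ hD]
  linarith [hstar]
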